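/- Let G be a finite group with a minimal abelian partition A_1 ⊎ ... ⊎ A_m where m ≥ 3. Then no part A_i is contained in the center Z(G). -/

import Mathlib

/-- An abelian partition of a group `G`: a family of `n` pairwise disjoint sets covering `G`,
each of size at least 2 and consisting of pairwise commuting elements. -/
def IsAbelianPartition {G : Type*} [Group G] {n : ℕ} (A : Fin n → Set G) : Prop :=
  (∀ i, 2 ≤ (A i).ncard) ∧ (⋃ i, A i) = Set.univ ∧
    Pairwise (Function.onFun Disjoint A) ∧
    ∀ i, ∀ x ∈ A i, ∀ y ∈ A i, x * y = y * x

/-- The minimal number of parts in an abelian partition of `G` (0 if none exists). -/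
noncomputable def apDegree (G : Type*) [Group G] : ℕ :=
  sInf {n | ∃ A : Fin n → Set G, IsAbelianPartition A}

/-- The maximal size of a noncommuting subset of `G`. -/
noncomputable def maxNoncommuting (G : Type*) [Group G] : ℕ :=
  sSup {k | ∃ S : Set G, S.ncard = k ∧ ∀ x ∈ S, ∀ y ∈ S, x ≠ y → x * y ≠ y * x}

theorem part_of_minimal_partition_not_in_center
    {G : Type*} [Group G] [Finite G]
    {m : ℕ} (hm : 3 ≤ m) (A : Fin m → Set G)
    (hA : IsAbelianPartition A) (hmin : apDegree G = m) :
    ∀ i, ¬ A i ⊆ (Subgroup.center G : Set G) := by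
  obtain ⟨n, rfl⟩ : ∃ n, m = n + 1 := ⟨m - 1, by omega⟩
  intro i hsub
  obtain ⟨hcard, hcov, hdisj, hcomm⟩ := hA
  have hn : 2 ≤ n := by omega
  have : Nonempty (Fin n) := ⟨⟨0, by omega⟩⟩
  set k₀ : Fin n := ⟨0, by omega⟩ with hk₀
  set j : Fin (n + 1) := i.succAbove k₀ with hj
  have hji : j ≠ i := Fin.succAbove_ne i k₀
  -- central elements commute with everything
  have hcent : ∀ x ∈ A i, ∀ g : G, x * g = g * x := by
    intro x hx g
    have h2 : x ∈ Subgroup.center G := hsub hx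
    rw [Subgroup.mem_center_iff] at h2
    exact (h2 g).symm
  set B : Fin n → Set G := fun k =>
    if i.succAbove k = j then A j ∪ A i else A (i.succAbove k) with hB
  have hBmem : (n : ℕ) ∈ {n | ∃ A : Fin n → Set G, IsAbelianPartition A} := by
    refine ⟨B, ?_, ?_, ?_, ?_⟩
    · intro k
      by_cases h : i.succAbove k = j
      · simp only [hB, h, if_pos rfl]
        calc 2 ≤ (A j).ncard := hcard j
          _ ≤ (A j ∪ A i).ncard :=
            Set.ncard_le_ncard Set.subset_union_left (Set.toFinite _)
      · simpa only [hB, if_neg h] using hcard (i.succAbove k)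
    · apply Set.eq_univ_of_forall
      intro x
      have hx : x ∈ ⋃ l, A l := by rw [hcov]; trivial
      obtain ⟨l, hl⟩ := Set.mem_iUnion.mp hx
      by_cases hli : l = i
      · refine Set.mem_iUnion.mpr ⟨k₀, ?_⟩
        simp only [hB, if_pos rfl]
        rw [if_pos hj.symm]; exact Or.inr (hli ▸ hl)
      · obtain ⟨k, hk⟩ := Fin.exists_succAbove_eq hli
        refine Set.mem_iUnion.mpr ⟨k, ?_⟩
        by_cases hlj : i.succAbove k = j
        · simp only [hB, if_pos hlj]
          exact Or.inl (by rw [← hlj, hk]; exact hl)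
        · simp only [hB, if_neg hlj]
          rw [hk]; exact hl
    · intro k k' hkk'
      have hne : i.succAbove k ≠ i.succAbove k' :=
        fun h => hkk' (Fin.succAbove_right_injective h)
      have d1 : Disjoint (A (i.succAbove k)) (A (i.succAbove k')) := hdisj hne
      have dik' : Disjoint (A i) (A (i.succAbove k')) := hdisj (Fin.succAbove_ne i k').symm
      have dki : Disjoint (A (i.succAbove k)) (A i) := hdisj (Fin.succAbove_ne i k)
      simp only [Function.onFun, hB]
      by_cases h : i.succAbove k = j
      · rw [if_pos h]
        have h' : i.succAbove k' ≠ j := fun hh => hne (h.trans hh.symm)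
        rw [if_neg h']
        exact Disjoint.union_left (h ▸ d1) dik'
      · rw [if_neg h]
        by_cases h' : i.succAbove k' = j
        · rw [if_pos h']
          exact Disjoint.union_right (h' ▸ d1) dki
        · rw [if_neg h']; exact d1
    · intro k x hx y hy
      by_cases h : i.succAbove k = j
      · simp only [hB, if_pos h] at hx hy
        rcases hx with hx | hx
        · rcases hy with hy | hy
          · exact hcomm j x hx y hy
          · exact (hcent y hy x).symm
        · exact hcent x hx y
      · simp only [hB, if_neg h] at hx hy
        exact hcomm _ x hx y hy
  have hle : apDegree G ≤ n := Nat.sInf_le hBmem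
  omega
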